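/- Let G be a subgroup of a group H such that H is locally ω-separated in G by retractions: for any finitely many nontrivial elements h₁, …, h_n ∈ H there is a homomorphism ψ : H → G that is the identity on G and with ψ(h_i) ≠ 1 for all i. Then G is existentially closed in H: any sentence of the form ∃x (⋀ᵢ uᵢ(x,g) = 1 ∧ ⋀ⱼ vⱼ(x,g) ≠ 1), with constants g from G, holds in H if and only if it holds in G. -/
import Mathlib


/-- Evaluation of a group word in variables `Fin n` and constants from the
subgroup `G` of `H`, at a tuple `x` of elements of `H`. -/
noncomputable def wordEval {H : Type} [Group H] (G : Subgroup H) {n : ℕ}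
    (x : Fin n → H) : FreeGroup (Fin n ⊕ G) →* H :=
  FreeGroup.lift (Sum.elim x (fun g => (g : H)))

/-- If `H` is locally ω-separated in its subgroup `G` by retractions (every finite
set of nontrivial elements of `H` survives some retraction `H → G`), then `G` is
existentially closed in `H`: a system of equations `uᵢ = 1` and inequations
`vⱼ ≠ 1` with constants from `G` has a solution in `H` iff it has one in `G`. -/
theorem existentially_closed_of_separated (H : Type) [Group H] (G : Subgroup H)
    (hsep : ∀ (m : ℕ) (h : Fin m → H), (∀ i, h i ≠ 1) →
      ∃ ψ : H →* H, (∀ g : G, ψ g = g) ∧ (∀ y : H, ψ y ∈ G) ∧ ∀ i, ψ (h i) ≠ 1)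
    (n k l : ℕ) (u : Fin k → FreeGroup (Fin n ⊕ G)) (v : Fin l → FreeGroup (Fin n ⊕ G)) :
    ((∃ x : Fin n → H, (∀ i, wordEval G x (u i) = 1) ∧ ∀ j, wordEval G x (v j) ≠ 1) ↔
     (∃ x : Fin n → H, (∀ i, x i ∈ G) ∧
        (∀ i, wordEval G x (u i) = 1) ∧ ∀ j, wordEval G x (v j) ≠ 1)) := by
  constructor
  · rintro ⟨x, hu, hv⟩
    obtain ⟨ψ, hfix, hmem, hne⟩ := hsep l (fun j => wordEval G x (v j)) hv
    have key : ∀ w : FreeGroup (Fin n ⊕ G),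
        wordEval G (fun i => ψ (x i)) w = ψ (wordEval G x w) := by
      intro w
      have : (wordEval G (fun i => ψ (x i)) : FreeGroup (Fin n ⊕ G) →* H)
          = ψ.comp (wordEval G x) := by
        apply FreeGroup.ext_hom
        rintro (i | g)
        · simp [wordEval]
        · simp [wordEval, hfix g]
      exact DFunLike.congr_fun this w
    refine ⟨fun i => ψ (x i), fun i => hmem (x i), fun i => ?_, fun j => ?_⟩
    · rw [key, hu i, map_one]
    · rw [key]; exact hne j
  · rintro ⟨x, _, hu, hv⟩
    exact ⟨x, hu, hv⟩
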